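/- The map sending x₁x₂…x_ℓ to its reversal x_ℓ…x₂x₁ is an isomorphism from the cyclic Kautz digraph CK(d,ℓ) to its converse digraph. -/
import Mathlib


/-- Consecutive entries are distinct. -/
abbrev consecNe {m n : ℕ} (x : Fin m → Fin n) : Prop :=
  ∀ i j : Fin m, j.val = i.val + 1 → x i ≠ x j

/-- First entry distinct from last entry. -/
abbrev firstNeLast {m n : ℕ} (x : Fin m → Fin n) : Prop :=
  ∀ i j : Fin m, i.val = 0 → j.val = m - 1 → x i ≠ x j

/-- Adjacency in the cyclic Kautz digraph `CK(d,ℓ)`: `y` is the left shift of `x` with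
a new last symbol distinct from `x₂` and from `x_ℓ`. -/
abbrev ckAdj {m n : ℕ} (x y : Fin m → Fin n) : Prop :=
  (∀ i j : Fin m, j.val = i.val + 1 → y i = x j) ∧
  (∀ i j : Fin m, i.val = m - 1 → j.val = 1 → y i ≠ x j) ∧
  (∀ i : Fin m, i.val = m - 1 → y i ≠ x i)

/-- The reversal map `Ψ(x₁x₂…x_ℓ) = x_ℓ…x₂x₁`. -/
def rev {m n : ℕ} (x : Fin m → Fin n) : Fin m → Fin n :=
  fun i => x ⟨m - 1 - i.val, by have := i.isLt; omega⟩

section Aux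
variable {m n : ℕ}

lemma rev_apply (x : Fin m → Fin n) (i : Fin m) :
    rev x i = x ⟨m - 1 - i.val, by have := i.isLt; omega⟩ := rfl

lemma rev_rev (x : Fin m → Fin n) : rev (rev x) = x := by
  funext i
  simp only [rev]
  congr 1
  ext
  have := i.isLt
  simp
  omega

lemma rev_vertex (x : Fin m → Fin n) (h : consecNe x ∧ firstNeLast x) :
    consecNe (rev x) ∧ firstNeLast (rev x) := by
  obtain ⟨h1, h2⟩ := h
  constructor
  · intro i j hij
    simp only [rev]
    have hi := i.isLt
    have hj := j.isLt
    exact (h1 ⟨m - 1 - j.val, by omega⟩ ⟨m - 1 - i.val, by omega⟩ (by simp; omega) ·.symm)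
  · intro i j hi hj
    simp only [rev]
    have hj' := j.isLt
    exact (h2 ⟨m - 1 - j.val, by omega⟩ ⟨m - 1 - i.val, by omega⟩ (by simp; omega)
      (by simp; omega) ·.symm)

end Aux

/-- Reversal is an isomorphism from the cyclic Kautz digraph `CK(d,ℓ)` to its converse:
it maps vertices bijectively to vertices, and `x → y` is an arc of `CK(d,ℓ)` iff
`Ψ(y) → Ψ(x)` is an arc of `CK(d,ℓ)`. -/
theorem stmt7 (d ℓ : ℕ) (hd : 2 ≤ d) (hℓ : 2 ≤ ℓ) :
    (∀ x : Fin ℓ → Fin (d + 1), consecNe x ∧ firstNeLast x →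
      consecNe (rev x) ∧ firstNeLast (rev x)) ∧
    Set.BijOn (rev (m := ℓ) (n := d + 1))
      {x | consecNe x ∧ firstNeLast x} {x | consecNe x ∧ firstNeLast x} ∧
    (∀ x y : Fin ℓ → Fin (d + 1), consecNe x ∧ firstNeLast x →
      consecNe y ∧ firstNeLast y → (ckAdj x y ↔ ckAdj (rev y) (rev x))) := by
  have hm : 2 ≤ ℓ := hℓ
  refine ⟨rev_vertex, ⟨fun x hx => rev_vertex x hx, fun a _ b _ hab => ?_,
    fun y hy => ⟨rev y, rev_vertex y hy, rev_rev y⟩⟩, ?_⟩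
  · have := congrArg rev hab
    rwa [rev_rev, rev_rev] at this
  · intro x y hx hy
    constructor
    · rintro ⟨a, b, c⟩
      refine ⟨?_, ?_, ?_⟩
      · intro i j hij
        simp only [rev]
        have hi := i.isLt
        have hj := j.isLt
        exact (a ⟨ℓ - 1 - j.val, by omega⟩ ⟨ℓ - 1 - i.val, by omega⟩ (by simp; omega)).symm
      · intro i j hi hj
        simp only [rev]
        have hy0 : y ⟨ℓ - 1 - j.val, by omega⟩ = x ⟨ℓ - 1, by omega⟩ :=
          a ⟨ℓ - 1 - j.val, by omega⟩ ⟨ℓ - 1, by omega⟩ (by simp; omega)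
        rw [show (⟨ℓ - 1 - i.val, by omega⟩ : Fin ℓ) = ⟨0, by omega⟩ from by ext; simp; omega,
          hy0]
        exact hx.2 ⟨0, by omega⟩ ⟨ℓ - 1, by omega⟩ rfl rfl
      · intro i hi
        simp only [rev]
        have hy0 : y ⟨ℓ - 1 - i.val, by omega⟩ = x ⟨1, by omega⟩ :=
          a ⟨ℓ - 1 - i.val, by omega⟩ ⟨1, by omega⟩ (by simp; omega)
        rw [hy0, show (⟨ℓ - 1 - i.val, by omega⟩ : Fin ℓ) = ⟨0, by omega⟩ from by
          ext; simp; omega]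
        exact hx.1 ⟨0, by omega⟩ ⟨1, by omega⟩ rfl
    · rintro ⟨a, b, c⟩
      have a' : ∀ i j : Fin ℓ, j.val = i.val + 1 → y i = x j := by
        intro i j hij
        have hi := i.isLt
        have hj := j.isLt
        have := a ⟨ℓ - 1 - j.val, by omega⟩ ⟨ℓ - 1 - i.val, by omega⟩ (by simp; omega)
        simp only [rev] at this
        rw [show (⟨ℓ - 1 - (ℓ - 1 - j.val), by omega⟩ : Fin ℓ) = j from by ext; simp; omega,
          show (⟨ℓ - 1 - (ℓ - 1 - i.val), by omega⟩ : Fin ℓ) = i from by ext; simp; omega]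
          at this
        exact this.symm
      refine ⟨a', ?_, ?_⟩
      · intro i j hi hj
        have h1 : x ⟨1, by omega⟩ = y ⟨0, by omega⟩ :=
          (a' ⟨0, by omega⟩ ⟨1, by omega⟩ rfl).symm
        rw [show j = ⟨1, by omega⟩ from by ext; simp; omega, h1]
        rw [show i = ⟨ℓ - 1, by omega⟩ from by ext; simp; omega]
        exact fun h => hy.2 ⟨0, by omega⟩ ⟨ℓ - 1, by omega⟩ rfl rfl h.symm
      · intro i hi
        have h1 : x i = y ⟨ℓ - 2, by omega⟩ :=
          (a' ⟨ℓ - 2, by omega⟩ i (by simp; omega)).symm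
        rw [h1]
        exact fun h => hy.1 ⟨ℓ - 2, by omega⟩ i (by simp; omega) h.symm
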